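/- arXiv:2511.21913 — 2 statements merged into one kernel-verified Lean document; each statement's English description precedes it below -/
import Mathlib

section
/- Let C be a regular category with pullbacks and p : E → B a morphism. The endofunctor T = p* ∘ p_! of C/E preserves kernel pairs. -/
open CategoryTheory CategoryTheory.Limits

/-- If `C` is a regular category and `p : E ⟶ B` a morphism, then the endofunctor
`T = p* ∘ p_!` of `C/E` preserves kernel pairs. -/
theorem stmt_12 (C : Type*) [Category C] [HasFiniteLimits C]
    (hcoeq : ∀ {X Y : C} (f : X ⟶ Y), HasCoequalizer (pullback.fst f f) (pullback.snd f f))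
    (hstab : ∀ {X Y Z : C} (f : X ⟶ Y) (g : Z ⟶ Y) (_ : RegularEpi f),
      Nonempty (RegularEpi (pullback.snd f g)))
    {E B : C} (p : E ⟶ B) :
    ∀ {R A A' : Over E} (f : A ⟶ A') (a b : R ⟶ A), IsKernelPair f a b →
      IsKernelPair ((Over.map p ⋙ Over.pullback p).map f)
        ((Over.map p ⋙ Over.pullback p).map a) ((Over.map p ⋙ Over.pullback p).map b) := by
  intro R A A' f a b h
  -- the underlying square in `C` is a pullback
  have h1 : IsPullback a.left b.left f.left f.left := h.map (Over.forget E)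
  -- hence the image square under `Over.map p` is a pullback in `Over B`
  have h2 : IsKernelPair ((Over.map p).map f) ((Over.map p).map a) ((Over.map p).map b) := by
    apply IsPullback.of_map (Over.forget B)
    · rw [← Functor.map_comp, ← Functor.map_comp, h.w]
    · exact h1
  -- `Over.pullback p` is a right adjoint, hence preserves pullbacks
  haveI : PreservesLimits (Over.pullback p) :=
    (Over.mapPullbackAdj p).rightAdjoint_preservesLimits
  exact h2.map (Over.pullback p)
end

section
/- Let X be a regular category. If U : A → X is a monadic functor whose associated monad has an underlying endofunctor preserving regular epimorphisms, then A (equivalently, the Eilenberg–Moore category of the monad) is a regular category. -/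
open CategoryTheory CategoryTheory.Limits

namespace Stmt15Aux

variable {C : Type*} [Category C]

/-- A regular epi composed with an iso is a regular epi. -/
noncomputable def regularEpiCompIso {P Q R : C} (f : P ⟶ Q) (g : Q ⟶ R)
    (re : RegularEpi f) [IsIso g] : RegularEpi (f ≫ g) where
  W := re.W
  left := re.left
  right := re.right
  w := by rw [← Category.assoc, ← Category.assoc, re.w]
  isColimit := Cofork.IsColimit.mk' _ (fun s => by
    obtain ⟨d, hd⟩ := Cofork.IsColimit.desc' re.isColimit s.π s.condition
    simp only [Cofork.π_ofπ] at hd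
    refine ⟨inv g ≫ d, ?_, ?_⟩
    · simp only [Cofork.π_ofπ, Category.assoc, IsIso.hom_inv_id_assoc, hd]
    · intro m hm
      simp only [Cofork.π_ofπ, Category.assoc] at hm
      have hg : g ≫ m = d := by
        haveI := RegularEpi.epi f re
        exact (cancel_epi f).1 (by rw [hm, hd])
      rw [← hg, IsIso.inv_hom_id_assoc])

/-- An iso composed with a regular epi is a regular epi. -/
noncomputable def regularEpiIsoComp {P Q R : C} (f : P ⟶ Q) (g : Q ⟶ R)
    [IsIso f] (re : RegularEpi g) : RegularEpi (f ≫ g) where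
  W := re.W
  left := re.left ≫ inv f
  right := re.right ≫ inv f
  w := by simp only [Category.assoc, IsIso.inv_hom_id_assoc, re.w]
  isColimit := Cofork.IsColimit.mk' _ (fun s => by
    have hcond : re.left ≫ inv f ≫ s.π = re.right ≫ inv f ≫ s.π := by
      have := s.condition
      simp only [Category.assoc] at this ⊢
      exact this
    obtain ⟨d, hd⟩ := Cofork.IsColimit.desc' re.isColimit (inv f ≫ s.π) hcond
    simp only [Cofork.π_ofπ] at hd
    refine ⟨d, ?_, ?_⟩
    · simp only [Cofork.π_ofπ, Category.assoc]
      rw [hd, IsIso.hom_inv_id_assoc]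
    · intro m hm
      simp only [Cofork.π_ofπ, Category.assoc] at hm
      haveI := RegularEpi.epi g re
      apply (cancel_epi g).1
      rw [hd, ← hm, IsIso.inv_hom_id_assoc])

end Stmt15Aux

namespace Stmt15

open Stmt15Aux

variable {X : Type*} [Category X] [HasFiniteLimits X]

section Factor

variable (hcoeq : ∀ {A B : X} (f : A ⟶ B), HasCoequalizer (pullback.fst f f) (pullback.snd f f))
variable {A B : X} (f : A ⟶ B)

/-- The image object of the canonical factorization. -/
noncomputable def imObj : X :=
  letI := hcoeq f
  coequalizer (pullback.fst f f) (pullback.snd f f)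

/-- The regular-epi part of the canonical factorization. -/
noncomputable def qMap : A ⟶ imObj hcoeq f :=
  letI := hcoeq f
  coequalizer.π (pullback.fst f f) (pullback.snd f f)

/-- The mono part of the canonical factorization. -/
noncomputable def mMap : imObj hcoeq f ⟶ B :=
  letI := hcoeq f
  coequalizer.desc f pullback.condition

lemma q_comp_m : qMap hcoeq f ≫ mMap hcoeq f = f := by
  letI := hcoeq f
  exact coequalizer.π_desc f pullback.condition

noncomputable def regularEpi_qMap : RegularEpi (qMap hcoeq f) := by
  letI := hcoeq f
  exact Cofork.IsColimit.regularEpi (colimit.isColimit _)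

lemma pair_eq_qMap : pullback.fst f f ≫ qMap hcoeq f = pullback.snd f f ≫ qMap hcoeq f := by
  letI := hcoeq f
  exact coequalizer.condition _ _

/-- Descend along the canonical coequalizer. -/
noncomputable def qDesc {Z : X} (h : A ⟶ Z)
    (hh : pullback.fst f f ≫ h = pullback.snd f f ≫ h) : imObj hcoeq f ⟶ Z :=
  letI := hcoeq f
  coequalizer.desc h hh

lemma qMap_qDesc {Z : X} (h : A ⟶ Z)
    (hh : pullback.fst f f ≫ h = pullback.snd f f ≫ h) :
    qMap hcoeq f ≫ qDesc hcoeq f h hh = h := by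
  letI := hcoeq f
  exact coequalizer.π_desc h hh

variable (hstab : ∀ {A B Z : X} (f : A ⟶ B) (g : Z ⟶ B) (_ : RegularEpi f),
      Nonempty (RegularEpi (pullback.snd f g)))

include hstab in
lemma mono_mMap : Mono (mMap hcoeq f) := by
  haveI := regularEpi_qMap hcoeq f
  have hqm : qMap hcoeq f ≫ mMap hcoeq f = f := q_comp_m hcoeq f
  haveI e1r : RegularEpi (pullback.snd (qMap hcoeq f) (pullback.fst (mMap hcoeq f) (mMap hcoeq f))) :=
    (hstab (qMap hcoeq f) _ this).some
  haveI e2r : RegularEpi (pullback.snd (qMap hcoeq f)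
      (pullback.snd (qMap hcoeq f) (pullback.fst (mMap hcoeq f) (mMap hcoeq f))
        ≫ pullback.snd (mMap hcoeq f) (mMap hcoeq f))) :=
    (hstab (qMap hcoeq f) _ this).some
  haveI := RegularEpi.epi _ e1r
  haveI := RegularEpi.epi _ e2r
  -- abbreviations (definitional):
  have c1 : pullback.fst (qMap hcoeq f) (pullback.fst (mMap hcoeq f) (mMap hcoeq f)) ≫ qMap hcoeq f
      = pullback.snd (qMap hcoeq f) (pullback.fst (mMap hcoeq f) (mMap hcoeq f))
        ≫ pullback.fst (mMap hcoeq f) (mMap hcoeq f) := pullback.condition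
  have c2 : pullback.fst (qMap hcoeq f)
        (pullback.snd (qMap hcoeq f) (pullback.fst (mMap hcoeq f) (mMap hcoeq f))
          ≫ pullback.snd (mMap hcoeq f) (mMap hcoeq f)) ≫ qMap hcoeq f
      = pullback.snd (qMap hcoeq f)
          (pullback.snd (qMap hcoeq f) (pullback.fst (mMap hcoeq f) (mMap hcoeq f))
            ≫ pullback.snd (mMap hcoeq f) (mMap hcoeq f))
        ≫ (pullback.snd (qMap hcoeq f) (pullback.fst (mMap hcoeq f) (mMap hcoeq f))
            ≫ pullback.snd (mMap hcoeq f) (mMap hcoeq f)) := pullback.condition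
  set q := qMap hcoeq f
  set m := mMap hcoeq f
  set e1 := pullback.snd q (pullback.fst m m)
  set s1 := pullback.fst q (pullback.fst m m)
  set e2 := pullback.snd q (e1 ≫ pullback.snd m m)
  set s2 := pullback.fst q (e1 ≫ pullback.snd m m)
  have hsf : (e2 ≫ s1) ≫ f = s2 ≫ f := by
    calc (e2 ≫ s1) ≫ f = e2 ≫ (s1 ≫ q) ≫ m := by simp only [Category.assoc]; rw [hqm]
    _ = e2 ≫ (e1 ≫ pullback.fst m m) ≫ m := by rw [c1]
    _ = e2 ≫ (e1 ≫ pullback.snd m m) ≫ m := by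
          simp only [Category.assoc]; rw [pullback.condition]
    _ = (s2 ≫ q) ≫ m := by rw [c2]; simp only [Category.assoc]; rfl
    _ = s2 ≫ f := by rw [Category.assoc, hqm]
  have lf := pullback.lift_fst (e2 ≫ s1) s2 hsf
  have ls := pullback.lift_snd (e2 ≫ s1) s2 hsf
  have key : e2 ≫ e1 ≫ pullback.fst m m = e2 ≫ e1 ≫ pullback.snd m m := by
    calc e2 ≫ e1 ≫ pullback.fst m m = e2 ≫ s1 ≫ q := by rw [c1]
    _ = (e2 ≫ s1) ≫ q := by simp only [Category.assoc]
    _ = (pullback.lift (e2 ≫ s1) s2 hsf ≫ pullback.fst f f) ≫ q := by rw [lf]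
    _ = pullback.lift (e2 ≫ s1) s2 hsf ≫ pullback.fst f f ≫ q := by
          simp only [Category.assoc]
    _ = pullback.lift (e2 ≫ s1) s2 hsf ≫ pullback.snd f f ≫ q := by
          rw [pair_eq_qMap hcoeq f]
    _ = (pullback.lift (e2 ≫ s1) s2 hsf ≫ pullback.snd f f) ≫ q := by
          simp only [Category.assoc]
    _ = s2 ≫ q := by rw [ls]
    _ = e2 ≫ e1 ≫ pullback.snd m m := c2
  have hk : pullback.fst m m = pullback.snd m m :=
    (cancel_epi e1).1 ((cancel_epi e2).1 key)
  constructor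
  intro Z u v huv
  rw [← pullback.lift_fst u v huv, hk, pullback.lift_snd u v huv]

end Factor

lemma kp_comp_eq {A B Z : X} {f : A ⟶ B} {P : X} {a b : P ⟶ A}
    (kp : IsKernelPair f a b) {h : A ⟶ Z} :
    (a ≫ h = b ≫ h) ↔ (pullback.fst f f ≫ h = pullback.snd f f ≫ h) := by
  constructor
  · intro hh
    have e1 := kp.lift_fst (pullback.fst f f) (pullback.snd f f) pullback.condition
    have e2 := kp.lift_snd (pullback.fst f f) (pullback.snd f f) pullback.condition
    calc pullback.fst f f ≫ h
        = (kp.lift (pullback.fst f f) (pullback.snd f f) pullback.condition ≫ a) ≫ h := by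
          rw [e1]
      _ = (kp.lift (pullback.fst f f) (pullback.snd f f) pullback.condition ≫ b) ≫ h := by
          rw [Category.assoc, Category.assoc, hh]
      _ = pullback.snd f f ≫ h := by rw [e2]
  · intro hh
    have e1 := pullback.lift_fst a b kp.w
    have e2 := pullback.lift_snd a b kp.w
    calc a ≫ h = (pullback.lift a b kp.w ≫ pullback.fst f f) ≫ h := by rw [e1]
      _ = (pullback.lift a b kp.w ≫ pullback.snd f f) ≫ h := by
          rw [Category.assoc, Category.assoc, hh]
      _ = b ≫ h := by rw [e2]

section MonadPart

open CategoryTheory.Monad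

variable (hcoeq : ∀ {A B : X} (f : A ⟶ B), HasCoequalizer (pullback.fst f f) (pullback.snd f f))
variable (hstab : ∀ {A B Z : X} (f : A ⟶ B) (g : Z ⟶ B) (_ : RegularEpi f),
      Nonempty (RegularEpi (pullback.snd f g)))
variable (T : Monad X)
variable (hrepi : ∀ {A B : X} (f : A ⟶ B) (_ : RegularEpi f), Nonempty (RegularEpi (T.map f)))

include hstab hrepi

lemma exists_structure {A B : T.Algebra} (f : A ⟶ B) :
    ∃ ι : T.obj (imObj hcoeq f.f) ⟶ imObj hcoeq f.f,
      T.map (qMap hcoeq f.f) ≫ ι = A.a ≫ qMap hcoeq f.f ∧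
      ι ≫ mMap hcoeq f.f = T.map (mMap hcoeq f.f) ≫ B.a ∧
      T.η.app (imObj hcoeq f.f) ≫ ι = 𝟙 _ ∧
      T.μ.app (imObj hcoeq f.f) ≫ ι = T.map ι ≫ ι := by
  haveI r0 := regularEpi_qMap hcoeq f.f
  haveI r1 := (hrepi (qMap hcoeq f.f) r0).some
  haveI r2 := (hrepi (T.map (qMap hcoeq f.f)) r1).some
  haveI := isRegularEpi_of_regularEpi r0
  haveI := isRegularEpi_of_regularEpi r1
  haveI := isRegularEpi_of_regularEpi r2
  haveI := mono_mMap hcoeq f.f hstab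
  have sq : CommSq (A.a ≫ qMap hcoeq f.f) (T.map (qMap hcoeq f.f)) (mMap hcoeq f.f)
      (T.map (mMap hcoeq f.f) ≫ B.a) := by
    constructor
    rw [Category.assoc, q_comp_m hcoeq f.f, ← Functor.map_comp_assoc,
      q_comp_m hcoeq f.f, f.h]
  refine ⟨sq.lift, sq.fac_left, sq.fac_right, ?_, ?_⟩
  · apply (cancel_epi (qMap hcoeq f.f)).1
    have nat : qMap hcoeq f.f ≫ T.η.app (imObj hcoeq f.f)
        = T.η.app A.A ≫ T.map (qMap hcoeq f.f) := by
      simpa using T.η.naturality (qMap hcoeq f.f)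
    rw [← Category.assoc, nat, Category.assoc, sq.fac_left, ← Category.assoc, A.unit]
    simp
  · apply (cancel_epi (T.map (T.map (qMap hcoeq f.f)))).1
    have nat : T.map (T.map (qMap hcoeq f.f)) ≫ T.μ.app (imObj hcoeq f.f)
        = T.μ.app A.A ≫ T.map (qMap hcoeq f.f) := by
      simpa using T.μ.naturality (qMap hcoeq f.f)
    calc T.map (T.map (qMap hcoeq f.f)) ≫ T.μ.app (imObj hcoeq f.f) ≫ sq.lift
        = (T.map (T.map (qMap hcoeq f.f)) ≫ T.μ.app (imObj hcoeq f.f)) ≫ sq.lift := by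
          rw [Category.assoc]
      _ = (T.μ.app A.A ≫ T.map (qMap hcoeq f.f)) ≫ sq.lift := by rw [nat]
      _ = T.μ.app A.A ≫ T.map (qMap hcoeq f.f) ≫ sq.lift := by rw [Category.assoc]
      _ = T.μ.app A.A ≫ A.a ≫ qMap hcoeq f.f := by rw [sq.fac_left]
      _ = (T.μ.app A.A ≫ A.a) ≫ qMap hcoeq f.f := by rw [Category.assoc]
      _ = (T.map A.a ≫ A.a) ≫ qMap hcoeq f.f := by rw [A.assoc]
      _ = T.map A.a ≫ A.a ≫ qMap hcoeq f.f := by rw [Category.assoc]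
      _ = T.map A.a ≫ T.map (qMap hcoeq f.f) ≫ sq.lift := by rw [sq.fac_left]
      _ = (T.map A.a ≫ T.map (qMap hcoeq f.f)) ≫ sq.lift := by rw [Category.assoc]
      _ = T.map (A.a ≫ qMap hcoeq f.f) ≫ sq.lift := by rw [Functor.map_comp]
      _ = T.map (T.map (qMap hcoeq f.f) ≫ sq.lift) ≫ sq.lift := by rw [sq.fac_left]
      _ = (T.map (T.map (qMap hcoeq f.f)) ≫ T.map sq.lift) ≫ sq.lift := by
          rw [Functor.map_comp]
      _ = T.map (T.map (qMap hcoeq f.f)) ≫ T.map sq.lift ≫ sq.lift := by rw [Category.assoc]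

include hcoeq in
lemma master [HasFiniteLimits T.Algebra] {A B : T.Algebra} (f : A ⟶ B) :
    ∃ (I : T.Algebra) (qA : A ⟶ I) (mA : I ⟶ B)
      (w : pullback.fst f f ≫ qA = pullback.snd f f ≫ qA),
      qA ≫ mA = f ∧ Mono mA.f ∧ Mono mA ∧ Nonempty (RegularEpi qA.f) ∧
      Nonempty (IsColimit (Cofork.ofπ qA w)) := by
  obtain ⟨ι, hql, hmr, hunit, hassoc⟩ := exists_structure hcoeq hstab T hrepi f
  haveI hre : RegularEpi (qMap hcoeq f.f) := regularEpi_qMap hcoeq f.f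
  haveI hTq := (hrepi (qMap hcoeq f.f) hre).some
  haveI := isRegularEpi_of_regularEpi hre
  haveI := isRegularEpi_of_regularEpi hTq
  have kp : IsKernelPair f.f (pullback.fst f f).f (pullback.snd f f).f :=
    (IsPullback.of_hasPullback f f).map (Monad.forget T)
  have w0 : (pullback.fst f f).f ≫ qMap hcoeq f.f
      = (pullback.snd f f).f ≫ qMap hcoeq f.f :=
    (kp_comp_eq kp).2 (pair_eq_qMap hcoeq f.f)
  have hmono := mono_mMap hcoeq f.f hstab
  refine ⟨⟨imObj hcoeq f.f, ι, hunit, hassoc⟩, ⟨qMap hcoeq f.f, hql⟩,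
    ⟨mMap hcoeq f.f, hmr.symm⟩, ?_, ?_, hmono, ?_, ⟨hre⟩, ?_⟩
  · ext1
    simpa using w0
  · ext1
    simpa using q_comp_m hcoeq f.f
  · exact (Monad.forget T).mono_of_mono_map hmono
  · refine ⟨Cofork.IsColimit.mk' _ (fun s => ?_)⟩
    have cond0 : (pullback.fst f f).f ≫ s.π.f = (pullback.snd f f).f ≫ s.π.f := by
      simpa using congrArg Monad.Algebra.Hom.f s.condition
    have cond1 : pullback.fst f.f f.f ≫ s.π.f = pullback.snd f.f f.f ≫ s.π.f :=
      (kp_comp_eq kp).1 cond0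
    have hd : qMap hcoeq f.f ≫ qDesc hcoeq f.f s.π.f cond1 = s.π.f :=
      qMap_qDesc hcoeq f.f s.π.f cond1
    have halg : T.map (qDesc hcoeq f.f s.π.f cond1) ≫ s.pt.a
        = ι ≫ qDesc hcoeq f.f s.π.f cond1 := by
      apply (cancel_epi (T.map (qMap hcoeq f.f))).1
      have hπh : T.map s.π.f ≫ s.pt.a = A.a ≫ s.π.f := s.π.h
      rw [← Functor.map_comp_assoc, hd, hπh]
      calc A.a ≫ s.π.f
          = A.a ≫ qMap hcoeq f.f ≫ qDesc hcoeq f.f s.π.f cond1 := by rw [hd]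
        _ = (A.a ≫ qMap hcoeq f.f) ≫ qDesc hcoeq f.f s.π.f cond1 := by
            rw [Category.assoc]
        _ = (T.map (qMap hcoeq f.f) ≫ ι) ≫ qDesc hcoeq f.f s.π.f cond1 := by rw [hql]
        _ = T.map (qMap hcoeq f.f) ≫ ι ≫ qDesc hcoeq f.f s.π.f cond1 := by
            rw [Category.assoc]
    refine ⟨⟨qDesc hcoeq f.f s.π.f cond1, halg⟩, ?_, ?_⟩
    · ext1
      simpa using hd
    · intro m hm
      ext1
      have h1 : qMap hcoeq f.f ≫ m.f = s.π.f := by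
        simpa using congrArg Monad.Algebra.Hom.f hm
      apply (cancel_epi (qMap hcoeq f.f)).1
      rw [h1, hd]

end MonadPart

end Stmt15

/-- If `X` is a regular category (finitely complete, with coequalizers of kernel pairs,
and regular epis stable under pullback) and `T` is a monad on `X` whose underlying
endofunctor preserves regular epimorphisms, then the Eilenberg–Moore category of
`T`-algebras is regular. -/
theorem stmt_15 (X : Type*) [Category X] [HasFiniteLimits X]
    (hcoeq : ∀ {A B : X} (f : A ⟶ B), HasCoequalizer (pullback.fst f f) (pullback.snd f f))
    (hstab : ∀ {A B Z : X} (f : A ⟶ B) (g : Z ⟶ B) (_ : RegularEpi f),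
      Nonempty (RegularEpi (pullback.snd f g)))
    (T : Monad X)
    (hrepi : ∀ {A B : X} (f : A ⟶ B) (_ : RegularEpi f), Nonempty (RegularEpi (T.map f))) :
    HasFiniteLimits T.Algebra ∧
    (∀ [HasFiniteLimits T.Algebra],
      (∀ {A B : T.Algebra} (f : A ⟶ B),
        HasCoequalizer (pullback.fst f f) (pullback.snd f f)) ∧
      (∀ {A B Z : T.Algebra} (f : A ⟶ B) (g : Z ⟶ B) (_ : RegularEpi f),
        Nonempty (RegularEpi (pullback.snd f g)))) := by
  have hFL : HasFiniteLimits T.Algebra := by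
    constructor
    intro J hJ hfin
    constructor
    intro D
    haveI : HasLimitsOfShape J X := HasFiniteLimits.out J
    exact Monad.hasLimit_of_comp_forget_hasLimit D
  refine ⟨hFL, ?_⟩
  intro inst
  constructor
  · intro A B f
    obtain ⟨I, qA, mA, w, hfac, hm0, hmA, hq0, ⟨colim⟩⟩ :=
      Stmt15.master hcoeq hstab T hrepi f
    exact HasColimit.mk ⟨Cofork.ofπ qA w, colim⟩
  · intro A B Z f g hf
    haveI := isRegularEpi_of_regularEpi hf
    obtain ⟨I, qA, mA, w, hfac, hm0, hmA, ⟨hq0⟩, ⟨colim⟩⟩ :=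
      Stmt15.master hcoeq hstab T hrepi f
    haveI : StrongEpi (qA ≫ mA) := by rw [hfac]; infer_instance
    haveI : StrongEpi mA := strongEpi_of_strongEpi qA mA
    haveI := hmA
    haveI : IsIso mA := isIso_of_mono_of_strongEpi mA
    haveI : IsIso mA.f := inferInstanceAs (IsIso ((Monad.forget T).map mA))
    haveI : RegularEpi qA.f := hq0
    have hff : qA.f ≫ mA.f = f.f := by rw [← hfac]; simp
    haveI : RegularEpi f.f := by
      rw [← hff]
      exact Stmt15Aux.regularEpiCompIso qA.f mA.f hq0
    haveI : RegularEpi (pullback.snd f.f g.f) := (hstab f.f g.f ‹RegularEpi f.f›).some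
    have kpb : IsPullback (pullback.fst f g).f (pullback.snd f g).f f.f g.f :=
      (IsPullback.of_hasPullback f g).map (Monad.forget T)
    haveI : RegularEpi ((pullback.snd f g).f) := by
      rw [← kpb.isoPullback_hom_snd]
      exact Stmt15Aux.regularEpiIsoComp _ _ ‹RegularEpi (pullback.snd f.f g.f)›
    obtain ⟨I', q', m', w', hfac', hm0', hmA', ⟨hq0''⟩, ⟨colim'⟩⟩ :=
      Stmt15.master hcoeq hstab T hrepi (pullback.snd f g)
    haveI : RegularEpi q' := ⟨_, pullback.fst _ _, pullback.snd _ _, w', colim'⟩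
    have e : q'.f ≫ m'.f = (pullback.snd f g).f := by rw [← hfac']; simp
    haveI : StrongEpi (q'.f ≫ m'.f) := by
      rw [e]; haveI := isRegularEpi_of_regularEpi ‹RegularEpi ((pullback.snd f g).f)›; infer_instance
    haveI : StrongEpi m'.f := strongEpi_of_strongEpi q'.f m'.f
    haveI := hm0'
    haveI : IsIso m'.f := isIso_of_mono_of_strongEpi m'.f
    haveI : IsIso ((Monad.forget T).map m') := ‹IsIso m'.f›
    haveI : IsIso m' := isIso_of_reflects_iso m' (Monad.forget T)
    exact ⟨by rw [← hfac']; exact Stmt15Aux.regularEpiCompIso q' m' ‹RegularEpi q'›⟩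
end
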